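/- Let M = (ρ, E) be a matroid and let Z(M) be its collection of cyclic flats. Then for every X ⊆ E, ρ(X) = min{ρ(F) + |X \ F| : F ∈ Z(M)}. -/

import Mathlib

/-- A matroid given by an integer-valued rank function on subsets of a finite ground set. -/
structure RankMatroid (α : Type) [DecidableEq α] where
  E : Finset α
  rk : Finset α → ℤ
  rk_nonneg : ∀ X : Finset α, X ⊆ E → 0 ≤ rk X
  rk_le_card : ∀ X : Finset α, X ⊆ E → rk X ≤ X.card
  rk_mono : ∀ X Y : Finset α, X ⊆ Y → Y ⊆ E → rk X ≤ rk Y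
  rk_submod : ∀ X Y : Finset α, X ⊆ E → Y ⊆ E → rk (X ∪ Y) + rk (X ∩ Y) ≤ rk X + rk Y

namespace RankMatroid

variable {α : Type} [DecidableEq α]

/-- The minimum distance `d_X` of the restriction to `X`:
`d_X = min {|Y| : Y ⊆ X, ρ(X \ Y) < ρ(X)}`. -/
noncomputable def dist (M : RankMatroid α) (X : Finset α) : ℕ :=
  sInf {m : ℕ | ∃ Y : Finset α, Y ⊆ X ∧ Y.card = m ∧ M.rk (X \ Y) < M.rk X}

/-- Closure: `cl(X) = {y ∈ E : ρ(X ∪ {y}) = ρ(X)}`. -/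
def cl (M : RankMatroid α) (X : Finset α) : Finset α :=
  M.E.filter fun y => M.rk (insert y X) = M.rk X

/-- `X` is cyclic if `ρ(X \ {x}) = ρ(X)` for every `x ∈ X`. -/
def Cyclic (M : RankMatroid α) (X : Finset α) : Prop :=
  ∀ x ∈ X, M.rk (X.erase x) = M.rk X

/-- Cyclic core: `cyc(X) = {x ∈ X : ρ(X \ {x}) = ρ(X)}`. -/
def cyc (M : RankMatroid α) (X : Finset α) : Finset α :=
  X.filter fun x => M.rk (X.erase x) = M.rk X

/-- A cyclic flat is a set which is both cyclic and a flat. -/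
def IsCyclicFlat (M : RankMatroid α) (X : Finset α) : Prop :=
  X ⊆ M.E ∧ M.Cyclic X ∧ M.cl X = X

/-- `Z(M)`: the collection of cyclic flats of `M`. -/
def Z (M : RankMatroid α) : Set (Finset α) := {X | M.IsCyclicFlat X}

/-- `M` is non-degenerate: every singleton has rank at least one and `d ≥ 2`. -/
def NonDegenerate (M : RankMatroid α) : Prop :=
  (∀ x ∈ M.E, 1 ≤ M.rk {x}) ∧ 2 ≤ M.dist M.E

/-- `R` is a repair set for `x` with parameters `(r, δ)`. -/
def IsRepairSet (M : RankMatroid α) (r δ : ℤ) (x : α) (R : Finset α) : Prop :=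
  R ⊆ M.E ∧ x ∈ R ∧ (R.card : ℤ) ≤ r + δ - 1 ∧ δ ≤ (M.dist R : ℤ)

/-- The collection of cyclic flats of the restriction `M|X`. -/
def ZIn (M : RankMatroid α) (X : Finset α) : Set (Finset α) :=
  {Y | Y ⊆ X ∧ M.Cyclic Y ∧ X.filter (fun z => M.rk (insert z Y) = M.rk Y) = Y}

/-- `FX` is the meet, in the lattice `(Z(M), ⊆)`, of all cyclic flats containing `X`. -/
def IsMeetOfFlatsContaining (M : RankMatroid α) (X FX : Finset α) : Prop :=
  FX ∈ M.Z ∧ (∀ F ∈ M.Z, X ⊆ F → FX ⊆ F) ∧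
    ∀ W ∈ M.Z, (∀ F ∈ M.Z, X ⊆ F → W ⊆ F) → W ⊆ FX

end RankMatroid

namespace RankMatroid

variable {α : Type} [DecidableEq α]

lemma rk_insert_le (M : RankMatroid α) {S : Finset α} {b : α}
    (h : insert b S ⊆ M.E) : M.rk (insert b S) ≤ M.rk S + 1 := by
  have hS : S ⊆ M.E := (Finset.subset_insert b S).trans h
  have hb : ({b} : Finset α) ⊆ M.E := by
    simp only [Finset.singleton_subset_iff]
    exact h (Finset.mem_insert_self b S)
  have hsub := M.rk_submod S {b} hS hb
  have h1 : M.rk {b} ≤ 1 := by simpa using M.rk_le_card {b} hb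
  have h0 : (0:ℤ) ≤ M.rk (S ∩ {b}) :=
    M.rk_nonneg _ ((Finset.inter_subset_left).trans hS)
  have heq : S ∪ {b} = insert b S := by
    rw [Finset.insert_eq, Finset.union_comm]
  rw [heq] at hsub
  linarith

lemma rk_union_le (M : RankMatroid α) (A : Finset α) :
    ∀ B : Finset α, A ∪ B ⊆ M.E → M.rk (A ∪ B) ≤ M.rk A + B.card := by
  intro B
  induction B using Finset.induction_on with
  | empty => intro _; simp
  | @insert b B hb ih =>
    intro h
    have hins : A ∪ insert b B = insert b (A ∪ B) := Finset.union_insert b A B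
    rw [hins] at h ⊢
    have h1 : M.rk (insert b (A ∪ B)) ≤ M.rk (A ∪ B) + 1 := M.rk_insert_le h
    have h2 := ih ((Finset.subset_insert b (A ∪ B)).trans h)
    rw [Finset.card_insert_of_notMem hb]
    push_cast
    linarith

lemma rk_le_rk_add_sdiff (M : RankMatroid α) {A B : Finset α} (hBA : B ⊆ A)
    (hA : A ⊆ M.E) : M.rk A ≤ M.rk B + ((A \ B).card : ℤ) := by
  have hu : B ∪ (A \ B) = A := Finset.union_sdiff_of_subset hBA
  calc M.rk A = M.rk (B ∪ (A \ B)) := by rw [hu]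
    _ ≤ M.rk B + ((A \ B).card : ℤ) := M.rk_union_le B (A \ B) (by rw [hu]; exact hA)

lemma cl_subset_E (M : RankMatroid α) (A : Finset α) : M.cl A ⊆ M.E :=
  Finset.filter_subset _ _

lemma subset_cl (M : RankMatroid α) {A : Finset α} (hA : A ⊆ M.E) : A ⊆ M.cl A := by
  intro x hx
  simp only [cl, Finset.mem_filter]
  exact ⟨hA hx, by rw [Finset.insert_eq_self.mpr hx]⟩

lemma rk_union_of_subset_cl (M : RankMatroid α) {A : Finset α} (hA : A ⊆ M.E) :
    ∀ S : Finset α, S ⊆ M.cl A → M.rk (A ∪ S) = M.rk A := by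
  intro S
  induction S using Finset.induction_on with
  | empty => intro _; simp
  | @insert b B hb ih =>
    intro h
    have hbcl : b ∈ M.cl A := h (Finset.mem_insert_self b B)
    have hBcl : B ⊆ M.cl A := (Finset.subset_insert b B).trans h
    have hbE : b ∈ M.E := (M.cl_subset_E A) hbcl
    have hbrk : M.rk (insert b A) = M.rk A := (Finset.mem_filter.mp hbcl).2
    have hAB : A ∪ B ⊆ M.E := by
      intro y hy
      rcases Finset.mem_union.mp hy with hy | hy
      · exact hA hy
      · exact (M.cl_subset_E A) (hBcl hy)
    have hbA : insert b A ⊆ M.E := Finset.insert_subset hbE hA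
    have hsub := M.rk_submod (A ∪ B) (insert b A) hAB hbA
    have hu : (A ∪ B) ∪ insert b A = insert b (A ∪ B) := by
      ext y
      simp only [Finset.mem_union, Finset.mem_insert]
      tauto
    have hiA : A ⊆ (A ∪ B) ∩ insert b A := by
      intro y hy
      exact Finset.mem_inter.mpr ⟨Finset.mem_union_left _ hy, Finset.mem_insert_of_mem hy⟩
    have hiE : (A ∪ B) ∩ insert b A ⊆ M.E := (Finset.inter_subset_left).trans hAB
    have hirk : M.rk A ≤ M.rk ((A ∪ B) ∩ insert b A) := M.rk_mono _ _ hiA hiE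
    rw [hu, ih hBcl, hbrk] at hsub
    have hins : A ∪ insert b B = insert b (A ∪ B) := Finset.union_insert b A B
    rw [hins]
    have hge : M.rk A ≤ M.rk (insert b (A ∪ B)) :=
      M.rk_mono _ _ (Finset.subset_union_left.trans (Finset.subset_insert _ _))
        (by rw [← hu]; intro y hy; rcases Finset.mem_union.mp hy with hy | hy
            exacts [hAB hy, hbA hy])
    linarith

lemma rk_cl (M : RankMatroid α) {A : Finset α} (hA : A ⊆ M.E) :
    M.rk (M.cl A) = M.rk A := by
  have := M.rk_union_of_subset_cl hA (M.cl A) (subset_refl _)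
  rwa [Finset.union_eq_right.mpr (M.subset_cl hA)] at this

lemma cl_cl (M : RankMatroid α) {A : Finset α} (hA : A ⊆ M.E) :
    M.cl (M.cl A) = M.cl A := by
  ext y
  unfold cl
  simp only [Finset.mem_filter]
  constructor
  · rintro ⟨hyE, hy⟩
    refine ⟨hyE, le_antisymm ?_ ?_⟩
    · calc M.rk (insert y A) ≤ M.rk (insert y (M.E.filter fun z => M.rk (insert z A) = M.rk A)) := by
            exact M.rk_mono _ _ (Finset.insert_subset_insert _ (M.subset_cl hA))
              (Finset.insert_subset hyE (M.cl_subset_E A))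
        _ = M.rk A := by rw [hy]; exact M.rk_cl hA
    · exact M.rk_mono A (insert y A) (Finset.subset_insert _ _)
        (Finset.insert_subset hyE hA)
  · rintro ⟨hyE, hy⟩
    refine ⟨hyE, ?_⟩
    have hycl : y ∈ M.E.filter (fun z => M.rk (insert z A) = M.rk A) :=
      Finset.mem_filter.mpr ⟨hyE, hy⟩
    rw [Finset.insert_eq_self.mpr hycl]

lemma cl_cyclic (M : RankMatroid α) {A : Finset α} (hA : A ⊆ M.E)
    (hc : M.Cyclic A) : M.Cyclic (M.cl A) := by
  intro x hx
  have hclE : M.cl A ⊆ M.E := M.cl_subset_E A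
  have hle : M.rk ((M.cl A).erase x) ≤ M.rk (M.cl A) :=
    M.rk_mono _ _ (Finset.erase_subset _ _) hclE
  by_cases hxA : x ∈ A
  · have h1 : M.rk (A.erase x) = M.rk A := hc x hxA
    have h2 : A.erase x ⊆ (M.cl A).erase x :=
      Finset.erase_subset_erase _ (M.subset_cl hA)
    have hge : M.rk (A.erase x) ≤ M.rk ((M.cl A).erase x) :=
      M.rk_mono _ _ h2 ((Finset.erase_subset _ _).trans hclE)
    have := M.rk_cl hA
    omega
  · have h2 : A ⊆ (M.cl A).erase x :=
      Finset.subset_erase.mpr ⟨M.subset_cl hA, hxA⟩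
    have hge : M.rk A ≤ M.rk ((M.cl A).erase x) :=
      M.rk_mono _ _ h2 ((Finset.erase_subset _ _).trans hclE)
    have := M.rk_cl hA
    omega

lemma cyc_subset (M : RankMatroid α) (A : Finset α) : M.cyc A ⊆ A :=
  Finset.filter_subset _ _

lemma rk_erase_coloop (M : RankMatroid α) {A Y : Finset α} {x : α} (hA : A ⊆ M.E)
    (hY : Y ⊆ A) (hxY : x ∈ Y) (hx : M.rk (A.erase x) < M.rk A) :
    M.rk (Y.erase x) ≤ M.rk Y - 1 := by
  have hu : A.erase x ∪ Y = A := by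
    ext y
    simp only [Finset.mem_union, Finset.mem_erase]
    constructor
    · rintro (⟨_, h⟩ | h)
      · exact h
      · exact hY h
    · intro h
      by_cases hyx : y = x
      · exact Or.inr (hyx ▸ hxY)
      · exact Or.inl ⟨hyx, h⟩
  have hi : A.erase x ∩ Y = Y.erase x := by
    ext y
    simp only [Finset.mem_inter, Finset.mem_erase]
    constructor
    · rintro ⟨⟨hyx, _⟩, h⟩; exact ⟨hyx, h⟩
    · rintro ⟨hyx, h⟩; exact ⟨⟨hyx, hY h⟩, h⟩
  have hsub := M.rk_submod (A.erase x) Y ((Finset.erase_subset _ _).trans hA) (hY.trans hA)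
  rw [hu, hi] at hsub
  linarith

lemma rk_sdiff_coloops (M : RankMatroid α) {A : Finset α} (hA : A ⊆ M.E) :
    ∀ D : Finset α, D ⊆ A → (∀ x ∈ D, M.rk (A.erase x) < M.rk A) →
      M.rk (A \ D) ≤ M.rk A - D.card := by
  intro D
  induction D using Finset.induction_on with
  | empty => intro _ _; simp
  | @insert x D hx ih =>
    intro hDA hcol
    have hxA : x ∈ A := hDA (Finset.mem_insert_self x D)
    have hDA' : D ⊆ A := (Finset.subset_insert x D).trans hDA
    have hs : A \ insert x D = (A \ D).erase x := by
      ext y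
      simp only [Finset.mem_sdiff, Finset.mem_erase, Finset.mem_insert]
      tauto
    have hxAD : x ∈ A \ D := Finset.mem_sdiff.mpr ⟨hxA, hx⟩
    have h1 : M.rk ((A \ D).erase x) ≤ M.rk (A \ D) - 1 :=
      M.rk_erase_coloop hA (Finset.sdiff_subset) hxAD
        (hcol x (Finset.mem_insert_self x D))
    have h2 := ih hDA' (fun y hy => hcol y (Finset.mem_insert_of_mem hy))
    rw [hs, Finset.card_insert_of_notMem hx]
    push_cast
    linarith

lemma rk_cyc (M : RankMatroid α) {A : Finset α} (hA : A ⊆ M.E) :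
    M.rk (M.cyc A) = M.rk A - ((A \ M.cyc A).card : ℤ) := by
  have hcs : M.cyc A ⊆ A := M.cyc_subset A
  have hAD : A \ (A \ M.cyc A) = M.cyc A := Finset.sdiff_sdiff_eq_self hcs
  have hcol : ∀ x ∈ A \ M.cyc A, M.rk (A.erase x) < M.rk A := by
    intro x hx
    rcases Finset.mem_sdiff.mp hx with ⟨hxA, hxc⟩
    have hne : M.rk (A.erase x) ≠ M.rk A := by
      intro h
      exact hxc (Finset.mem_filter.mpr ⟨hxA, h⟩)
    have hle : M.rk (A.erase x) ≤ M.rk A :=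
      M.rk_mono _ _ (Finset.erase_subset _ _) hA
    omega
  have h1 := M.rk_sdiff_coloops hA (A \ M.cyc A) (Finset.sdiff_subset) hcol
  rw [hAD] at h1
  have h2 := M.rk_le_rk_add_sdiff hcs hA
  omega

lemma cyc_cyclic (M : RankMatroid α) {A : Finset α} (hA : A ⊆ M.E) :
    M.Cyclic (M.cyc A) := by
  intro x hx
  rcases Finset.mem_filter.mp hx with ⟨hxA, hrk⟩
  have hcs : M.cyc A ⊆ A := M.cyc_subset A
  have hle : M.rk ((M.cyc A).erase x) ≤ M.rk (M.cyc A) :=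
    M.rk_mono _ _ (Finset.erase_subset _ _) (hcs.trans hA)
  have hsd : (A.erase x) \ ((M.cyc A).erase x) = A \ M.cyc A := by
    ext y
    simp only [Finset.mem_sdiff, Finset.mem_erase]
    constructor
    · rintro ⟨⟨hyx, hyA⟩, h⟩
      exact ⟨hyA, fun hc => h ⟨hyx, hc⟩⟩
    · rintro ⟨hyA, h⟩
      have hyx : y ≠ x := fun he => h (he ▸ hx)
      exact ⟨⟨hyx, hyA⟩, fun hc => h hc.2⟩
  have hge := M.rk_le_rk_add_sdiff
    (Finset.erase_subset_erase x hcs) ((Finset.erase_subset _ _).trans hA)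
  rw [hsd, hrk] at hge
  have := M.rk_cyc hA
  omega

lemma rk_le_flat_bound (M : RankMatroid α) {X F : Finset α} (hX : X ⊆ M.E)
    (hF : F ⊆ M.E) : M.rk X ≤ M.rk F + ((X \ F).card : ℤ) := by
  have hXsub : X ⊆ F ∪ (X \ F) := by
    intro y hy
    by_cases hyF : y ∈ F
    · exact Finset.mem_union_left _ hyF
    · exact Finset.mem_union_right _ (Finset.mem_sdiff.mpr ⟨hy, hyF⟩)
  have hE : F ∪ (X \ F) ⊆ M.E := by
    intro y hy
    rcases Finset.mem_union.mp hy with hy | hy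
    · exact hF hy
    · exact hX (Finset.mem_sdiff.mp hy).1
  calc M.rk X ≤ M.rk (F ∪ (X \ F)) := M.rk_mono _ _ hXsub hE
    _ ≤ M.rk F + ((X \ F).card : ℤ) := M.rk_union_le F (X \ F) hE

end RankMatroid


/-- `ρ(X) = min {ρ(F) + |X \ F| : F ∈ Z(M)}` for every `X ⊆ E`. -/
theorem stmt2 {α : Type} [DecidableEq α] (M : RankMatroid α)
    (X : Finset α) (hX : X ⊆ M.E) :
    IsLeast {v : ℤ | ∃ F ∈ M.Z, v = M.rk F + (((X \ F).card : ℤ))} (M.rk X) := by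
  constructor
  · -- membership: F = cl (cyc (cl X)) works
    set C := M.cl X with hCdef
    set Y := M.cyc C with hYdef
    set F := M.cl Y with hFdef
    have hCE : C ⊆ M.E := M.cl_subset_E X
    have hXC : X ⊆ C := M.subset_cl hX
    have hrkC : M.rk C = M.rk X := M.rk_cl hX
    have hYC : Y ⊆ C := M.cyc_subset C
    have hYE : Y ⊆ M.E := hYC.trans hCE
    have hrkY : M.rk Y = M.rk C - ((C \ Y).card : ℤ) := M.rk_cyc hCE
    have hYcyc : M.Cyclic Y := M.cyc_cyclic hCE
    have hFE : F ⊆ M.E := M.cl_subset_E Y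
    have hrkF : M.rk F = M.rk Y := M.rk_cl hYE
    have hYF : Y ⊆ F := M.subset_cl hYE
    have hFZ : F ∈ M.Z := ⟨hFE, M.cl_cyclic hYE hYcyc, M.cl_cl hYE⟩
    refine ⟨F, hFZ, ?_⟩
    have hlb : M.rk X ≤ M.rk F + ((X \ F).card : ℤ) := M.rk_le_flat_bound hX hFE
    have hcard : (X \ F).card ≤ (C \ Y).card :=
      Finset.card_le_card (Finset.sdiff_subset_sdiff hXC hYF)
    have hub : M.rk F + ((X \ F).card : ℤ) ≤ M.rk X := by
      have : ((X \ F).card : ℤ) ≤ ((C \ Y).card : ℤ) := by exact_mod_cast hcard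
      omega
    omega
  · rintro v ⟨F, ⟨hFE, _, _⟩, rfl⟩
    exact M.rk_le_flat_bound hX hFE
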